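/- Let λ > 0 and let ψ : S → ℝ be integrable. Set C₁ = ∫_{−∞}^0 e^{λy} ψ(y,1) dy and C₄ = ∫_0^∞ e^{−λy} ψ(y,−1) dy, and define φ : S → ℝ by: φ(x,1) = e^{−λx} ∫_{−∞}^x e^{λy} ψ(y,1) dy for x < 0; φ(x,1) = (p·C₁ + q'·C₄) e^{−λx} + ∫_0^x e^{−λ(x−y)} ψ(y,1) dy for x > 0; φ(x,−1) = e^{λx} ∫_x^∞ e^{−λy} ψ(y,−1) dy for x > 0; φ(x,−1) = (p'·C₁ + q·C₄) e^{λx} + ∫_x^0 e^{λ(x−y)} ψ(y,−1) dy for x < 0. Then φ is integrable on S and satisfies: φ(x,1) = C₁ + ∫_x^0 [λφ(y,1) − ψ(y,1)] dy for x < 0; φ(x,1) = (p·C₁ + q'·C₄) − ∫_0^x [λφ(y,1) − ψ(y,1)] dy for x > 0; φ(x,−1) = C₄ + ∫_0^x [λφ(y,−1) − ψ(y,−1)] dy for x > 0; φ(x,−1) = (p'·C₁ + q·C₄) − ∫_x^0 [λφ(y,−1) − ψ(y,−1)] dy for x < 0. In particular the one-sided limits of φ at 0 exist and satisfy φ(0+,1)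 = p·φ(0−,1) + q'·φ(0+,−1) and φ(0−,−1) = p'·φ(0−,1) + q·φ(0+,−1). -/

import Mathlib

open MeasureTheory Real Filter

noncomputable section
open Set

lemma intexp (l u v : ℝ) : ∫ y in u..v, l * Real.exp (-(l*y)) = Real.exp (-(l*u)) - Real.exp (-(l*v)) := by
  have h : ∀ y : ℝ, HasDerivAt (fun t : ℝ => -Real.exp (-(l*t))) (l * Real.exp (-(l*y))) y := by
    intro y
    have h1 : HasDerivAt (fun t : ℝ => -(l*t)) (-l) y := by
      simpa using ((hasDerivAt_id y).const_mul (-l))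
    have h2 := (h1.exp).neg
    exact h2.congr_deriv (by ring)
  rw [intervalIntegral.integral_eq_sub_of_hasDerivAt (fun y _ => h y)
    (((continuous_const.mul ((continuous_const.mul continuous_id).neg.rexp)).intervalIntegrable u v))]
  ring

lemma fub_neg (l a b : ℝ) (hab : a ≤ b) (g : ℝ → ℝ) (hg : Integrable g) :
    ∫ y in a..b, l * Real.exp (-(l*y)) * (∫ z in a..y, g z)
      = ∫ z in a..b, (Real.exp (-(l*z)) - Real.exp (-(l*b))) * g z := by
  set μ := volume.restrict (Set.Ioc a b) with hμdef
  haveI : IsFiniteMeasure μ := by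
    constructor
    rw [hμdef, Measure.restrict_apply_univ, Real.volume_Ioc]
    exact ENNReal.ofReal_lt_top
  set S : Set (ℝ × ℝ) := {p : ℝ × ℝ | p.2 ≤ p.1} with hSdef
  have hS : MeasurableSet S := measurableSet_le measurable_snd measurable_fst
  set f : ℝ → ℝ → ℝ := fun y z => S.indicator (fun p => l * Real.exp (-(l*p.1)) * g p.2) (y, z) with hfdef
  -- integrability of uncurry f
  have hprod : μ.prod μ = (volume.prod volume).restrict ((Set.Ioc a b) ×ˢ (Set.Ioc a b)) :=
    Measure.prod_restrict _ _
  have haesm : AEStronglyMeasurable (Function.uncurry f) (μ.prod μ) := by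
    apply AEStronglyMeasurable.indicator _ hS
    exact ((continuous_const.mul ((continuous_const.mul continuous_fst).neg.rexp)).aestronglyMeasurable).mul
      ((hg.1.restrict (s := Set.Ioc a b)).comp_snd)
  set C : ℝ := |l| * Real.exp (|l| * |a| + |l| * |b|) with hCdef
  have hbound : ∀ᵐ p ∂(μ.prod μ), ‖Function.uncurry f p‖ ≤ C * |g p.2| := by
    rw [hprod]
    filter_upwards [ae_restrict_mem (measurableSet_Ioc.prod measurableSet_Ioc)] with p hp
    have hp1 : p.1 ∈ Set.Ioc a b := hp.1
    have h1 := norm_indicator_le_norm_self (s := S) (fun p : ℝ × ℝ => l * Real.exp (-(l*p.1)) * g p.2) (p.1, p.2)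
    refine le_trans h1 ?_
    rw [norm_mul, norm_mul]
    have he : ‖Real.exp (-(l*p.1))‖ ≤ Real.exp (|l| * |a| + |l| * |b|) := by
      rw [Real.norm_eq_abs, abs_of_pos (Real.exp_pos _)]
      apply Real.exp_le_exp.2
      have : |p.1| ≤ |a| + |b| := by
        rw [abs_le]
        constructor
        · nlinarith [hp1.1, neg_abs_le a, abs_nonneg b]
        · nlinarith [hp1.2, le_abs_self b, abs_nonneg a]
      calc -(l*p.1) ≤ |l*p.1| := neg_le_abs _
        _ = |l| * |p.1| := abs_mul _ _
        _ ≤ |l| * (|a| + |b|) := by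
            exact mul_le_mul_of_nonneg_left this (abs_nonneg l)
        _ = |l| * |a| + |l| * |b| := by ring
    calc ‖l‖ * ‖Real.exp (-(l*p.1))‖ * ‖g p.2‖
        ≤ |l| * Real.exp (|l| * |a| + |l| * |b|) * ‖g p.2‖ := by
          apply mul_le_mul_of_nonneg_right _ (norm_nonneg _)
          exact mul_le_mul_of_nonneg_left he (abs_nonneg l)
      _ = C * |g p.2| := by rw [hCdef]; rfl
  have hdom : Integrable (fun p : ℝ × ℝ => C * |g p.2|) (μ.prod μ) := by
    have := (integrable_const (μ := μ) C).mul_prod (hg.norm.restrict (s := Set.Ioc a b))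
    simpa using this
  have hint : Integrable (Function.uncurry f) (μ.prod μ) := Integrable.mono' hdom haesm hbound
  have hswap := integral_integral_swap hint
  -- identify LHS
  have hL : ∫ y in a..b, l * Real.exp (-(l*y)) * (∫ z in a..y, g z) = ∫ y, (∫ z, f y z ∂μ) ∂μ := by
    rw [intervalIntegral.integral_of_le hab]
    apply setIntegral_congr_fun measurableSet_Ioc
    intro y hy
    dsimp only
    have hfy : (fun z => f y z) = (Set.Iic y).indicator (fun z => l * Real.exp (-(l*y)) * g z) := by
      funext z
      by_cases hz : z ≤ y
      · simp [hfdef, hSdef, Set.indicator_of_mem, hz]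
      · simp [hfdef, hSdef, Set.indicator_of_notMem, hz]
    rw [hfy, integral_indicator measurableSet_Iic, hμdef, Measure.restrict_restrict measurableSet_Iic]
    have hset : Set.Iic y ∩ Set.Ioc a b = Set.Ioc a y := by
      ext z; simp only [Set.mem_inter_iff, Set.mem_Iic, Set.mem_Ioc]
      exact ⟨fun ⟨h1, h2, _⟩ => ⟨h2, h1⟩, fun ⟨h1, h2⟩ => ⟨h2, h1, h2.trans hy.2⟩⟩
    rw [hset, MeasureTheory.integral_const_mul, intervalIntegral.integral_of_le hy.1.le]
  -- identify RHS
  have hR : ∫ z, (∫ y, f y z ∂μ) ∂μ = ∫ z in a..b, (Real.exp (-(l*z)) - Real.exp (-(l*b))) * g z := by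
    rw [intervalIntegral.integral_of_le hab]
    apply setIntegral_congr_fun measurableSet_Ioc
    intro z hz
    dsimp only
    have hfz : (fun y => f y z) = (Set.Ici z).indicator (fun y => l * Real.exp (-(l*y)) * g z) := by
      funext y
      by_cases hy : z ≤ y
      · simp [hfdef, hSdef, Set.indicator_of_mem, hy]
      · simp [hfdef, hSdef, Set.indicator_of_notMem, hy]
    rw [hfz, integral_indicator measurableSet_Ici, hμdef, Measure.restrict_restrict measurableSet_Ici]
    have hset : Set.Ici z ∩ Set.Ioc a b = Set.Icc z b := by
      ext y; simp only [Set.mem_inter_iff, Set.mem_Ici, Set.mem_Icc, Set.mem_Ioc]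
      exact ⟨fun ⟨h1, _, h3⟩ => ⟨h1, h3⟩, fun ⟨h1, h2⟩ => ⟨h1, hz.1.trans_le h1, h2⟩⟩
    rw [hset]
    have : ∫ y in Set.Icc z b, l * Real.exp (-(l*y)) * g z
        = (∫ y in Set.Icc z b, l * Real.exp (-(l*y))) * g z := by
      rw [← smul_eq_mul, ← integral_smul_const]
      simp [smul_eq_mul]
    rw [this, MeasureTheory.integral_Icc_eq_integral_Ioc, ← intervalIntegral.integral_of_le hz.2, intexp]
  rw [hL, hswap, hR]

lemma ae_ne_zero : ∀ᵐ (y : ℝ), y ≠ 0 := by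
  refine ae_iff.2 ?_
  simp only [ne_eq, not_not, Set.setOf_eq_eq_singleton]
  exact measure_singleton 0

lemma id1 (l : ℝ) (hl : 0 < l) (ψ φ : ℝ → ℝ) (hψ : Integrable ψ)
    (hφ : ∀ x < (0:ℝ), φ x = Real.exp (-(l*x)) * ∫ y in Set.Iic x, Real.exp (l*y) * ψ y)
    {x : ℝ} (hx : x < 0) :
    φ x = (∫ y in Set.Iic (0:ℝ), Real.exp (l*y) * ψ y) + ∫ y in x..(0:ℝ), (l * φ y - ψ y) := by
  set g : ℝ → ℝ := Set.indicator (Set.Iic (0:ℝ)) (fun z => Real.exp (l*z) * ψ z) with hgdef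
  have hgi : Integrable g := by
    apply IntegrableOn.integrable_indicator _ measurableSet_Iic
    apply Integrable.mono' (hψ.norm.restrict)
    · exact ((continuous_const.mul continuous_id).rexp.aestronglyMeasurable.restrict).mul hψ.1.restrict
    · filter_upwards [ae_restrict_mem measurableSet_Iic] with z hz
      rw [norm_mul]
      have h1 : Real.exp (l*z) ≤ 1 := Real.exp_le_one_iff.2 (by nlinarith [Set.mem_Iic.1 hz, hl.le])
      calc ‖Real.exp (l*z)‖ * ‖ψ z‖ ≤ 1 * ‖ψ z‖ := by
            apply mul_le_mul_of_nonneg_right _ (norm_nonneg _)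
            rw [Real.norm_eq_abs, abs_of_pos (Real.exp_pos _)]; exact h1
        _ = ‖ψ z‖ := one_mul _
  have hFsplit : ∀ y ∈ Set.Icc x (0:ℝ), (∫ z in Set.Iic y, Real.exp (l*z) * ψ z)
      = (∫ z in Set.Iic x, Real.exp (l*z) * ψ z) + ∫ z in x..y, g z := by
    intro y hy
    have h1 : ∀ w ≤ (0:ℝ), ∫ z in Set.Iic w, Real.exp (l*z) * ψ z = ∫ z in Set.Iic w, g z := by
      intro w hw
      apply setIntegral_congr_fun measurableSet_Iic
      intro z hz
      rw [hgdef, Set.indicator_of_mem (Set.mem_Iic.2 (le_trans (Set.mem_Iic.1 hz) hw))]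
    have hdisj : Disjoint (Set.Iic x) (Set.Ioc x y) := by
      rw [Set.disjoint_left]; intro z hz1 hz2
      exact absurd hz2.1 (not_lt.2 (Set.mem_Iic.1 hz1))
    rw [h1 y hy.2, h1 x hx.le, intervalIntegral.integral_of_le hy.1,
      ← setIntegral_union hdisj measurableSet_Ioc hgi.integrableOn hgi.integrableOn,
      Set.Iic_union_Ioc_eq_Iic hy.1]
  have hprim : Continuous (fun y => ∫ z in x..y, g z) :=
    intervalIntegral.continuous_primitive (fun _ _ => hgi.intervalIntegrable) x
  have hcexp : Continuous (fun y : ℝ => l * Real.exp (-(l*y))) :=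
    continuous_const.mul ((continuous_const.mul continuous_id).neg.rexp)
  have i1 : IntervalIntegrable (fun y => l * Real.exp (-(l*y)) * (∫ z in Set.Iic x, Real.exp (l*z) * ψ z)) volume x 0 :=
    (hcexp.mul continuous_const).intervalIntegrable _ _
  have i2 : IntervalIntegrable (fun y => l * Real.exp (-(l*y)) * (∫ z in x..y, g z)) volume x 0 :=
    (hcexp.mul hprim).intervalIntegrable _ _
  have i3 : IntervalIntegrable ψ volume x 0 := hψ.intervalIntegrable
  have i4 : IntervalIntegrable g volume x 0 := hgi.intervalIntegrable
  have key : ∫ y in x..(0:ℝ), (l * φ y - ψ y)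
      = ∫ y in x..(0:ℝ), (l * Real.exp (-(l*y)) * (∫ z in Set.Iic x, Real.exp (l*z) * ψ z)
          + l * Real.exp (-(l*y)) * (∫ z in x..y, g z) - ψ y) := by
    apply intervalIntegral.integral_congr_ae
    filter_upwards [ae_ne_zero] with y hy0 hymem
    rw [Set.uIoc_of_le hx.le] at hymem
    have hyneg : y < 0 := lt_of_le_of_ne hymem.2 hy0
    rw [hφ y hyneg, hFsplit y ⟨hymem.1.le, hymem.2⟩]
    ring
  rw [key, intervalIntegral.integral_sub (i1.add i2) i3, intervalIntegral.integral_add i1 i2,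
    fub_neg l x 0 hx.le g hgi]
  have e1 : ∫ y in x..(0:ℝ), l * Real.exp (-(l*y)) * (∫ z in Set.Iic x, Real.exp (l*z) * ψ z)
      = (Real.exp (-(l*x)) - Real.exp (-(l*0))) * (∫ z in Set.Iic x, Real.exp (l*z) * ψ z) := by
    rw [intervalIntegral.integral_mul_const, intexp]
  have e2 : ∫ z in x..(0:ℝ), (Real.exp (-(l*z)) - Real.exp (-(l*(0:ℝ)))) * g z
      = (∫ z in x..(0:ℝ), ψ z) - ∫ z in x..(0:ℝ), g z := by
    rw [← intervalIntegral.integral_sub i3 i4]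
    apply intervalIntegral.integral_congr
    intro z hz
    rw [Set.uIcc_of_le hx.le] at hz
    dsimp only
    rw [hgdef, Set.indicator_of_mem (Set.mem_Iic.2 hz.2)]
    have h1 : Real.exp (-(l*z)) * Real.exp (l*z) = 1 := by rw [← Real.exp_add]; simp
    have h2 : Real.exp (-(l*(0:ℝ))) = 1 := by simp
    rw [h2]
    linear_combination ψ z * h1
  have e3 : ∫ z in x..(0:ℝ), g z = (∫ z in Set.Iic (0:ℝ), Real.exp (l*z) * ψ z)
      - (∫ z in Set.Iic x, Real.exp (l*z) * ψ z) := by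
    have := hFsplit 0 ⟨hx.le, le_rfl⟩; linarith
  rw [e1, e2, e3, hφ x hx]
  have h2 : Real.exp (-(l*(0:ℝ))) = 1 := by simp
  rw [h2]
  ring

lemma id2 (l A : ℝ) (hl : 0 < l) (ψ φ : ℝ → ℝ) (hψ : Integrable ψ)
    (hφ : ∀ x > (0:ℝ), φ x = A * Real.exp (-(l*x)) + ∫ y in (0:ℝ)..x, Real.exp (-(l*(x-y))) * ψ y)
    {x : ℝ} (hx : 0 < x) :
    φ x = A - ∫ y in (0:ℝ)..x, (l * φ y - ψ y) := by
  set g : ℝ → ℝ := Set.indicator (Set.Ioc (0:ℝ) x) (fun z => Real.exp (l*z) * ψ z) with hgdef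
  have hgi : Integrable g := by
    apply IntegrableOn.integrable_indicator _ measurableSet_Ioc
    apply Integrable.mono' ((hψ.norm.const_mul (Real.exp (l*x))).restrict)
    · exact ((continuous_const.mul continuous_id).rexp.aestronglyMeasurable.restrict).mul hψ.1.restrict
    · filter_upwards [ae_restrict_mem measurableSet_Ioc] with z hz
      rw [norm_mul, Real.norm_eq_abs, abs_of_pos (Real.exp_pos _)]
      exact mul_le_mul_of_nonneg_right
        (Real.exp_le_exp.2 (mul_le_mul_of_nonneg_left hz.2 hl.le)) (norm_nonneg _)
  have hval : ∀ y, 0 < y → y ≤ x →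
      φ y = A * Real.exp (-(l*y)) + Real.exp (-(l*y)) * ∫ z in (0:ℝ)..y, g z := by
    intro y hy hyx
    rw [hφ y hy]
    congr 1
    rw [← intervalIntegral.integral_const_mul]
    apply intervalIntegral.integral_congr_ae
    filter_upwards [] with z hz
    rw [Set.uIoc_of_le hy.le] at hz
    rw [hgdef, Set.indicator_of_mem (Set.mem_Ioc.2 ⟨hz.1, hz.2.trans hyx⟩)]
    rw [← mul_assoc, ← Real.exp_add]
    congr 2
    ring
  have hprim : Continuous (fun y => ∫ z in (0:ℝ)..y, g z) :=
    intervalIntegral.continuous_primitive (fun _ _ => hgi.intervalIntegrable) 0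
  have hcexp : Continuous (fun y : ℝ => l * Real.exp (-(l*y))) :=
    continuous_const.mul ((continuous_const.mul continuous_id).neg.rexp)
  have i1 : IntervalIntegrable (fun y => l * Real.exp (-(l*y)) * A) volume 0 x :=
    (hcexp.mul continuous_const).intervalIntegrable _ _
  have i2 : IntervalIntegrable (fun y => l * Real.exp (-(l*y)) * (∫ z in (0:ℝ)..y, g z)) volume 0 x :=
    (hcexp.mul hprim).intervalIntegrable _ _
  have i3 : IntervalIntegrable ψ volume 0 x := hψ.intervalIntegrable
  have i4 : IntervalIntegrable g volume 0 x := hgi.intervalIntegrable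
  have key : ∫ y in (0:ℝ)..x, (l * φ y - ψ y)
      = ∫ y in (0:ℝ)..x, (l * Real.exp (-(l*y)) * A
          + l * Real.exp (-(l*y)) * (∫ z in (0:ℝ)..y, g z) - ψ y) := by
    apply intervalIntegral.integral_congr_ae
    filter_upwards [] with y hymem
    rw [Set.uIoc_of_le hx.le] at hymem
    rw [hval y hymem.1 hymem.2]
    ring
  rw [key, intervalIntegral.integral_sub (i1.add i2) i3, intervalIntegral.integral_add i1 i2,
    fub_neg l 0 x hx.le g hgi]
  have e1 : ∫ y in (0:ℝ)..x, l * Real.exp (-(l*y)) * A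
      = (Real.exp (-(l*(0:ℝ))) - Real.exp (-(l*x))) * A := by
    rw [intervalIntegral.integral_mul_const, intexp]
  have e2 : ∫ z in (0:ℝ)..x, (Real.exp (-(l*z)) - Real.exp (-(l*x))) * g z
      = (∫ z in (0:ℝ)..x, ψ z) - Real.exp (-(l*x)) * ∫ z in (0:ℝ)..x, g z := by
    rw [← intervalIntegral.integral_const_mul, ← intervalIntegral.integral_sub i3 (i4.const_mul _)]
    apply intervalIntegral.integral_congr_ae
    filter_upwards [] with z hz
    rw [Set.uIoc_of_le hx.le] at hz
    rw [hgdef, Set.indicator_of_mem (Set.mem_Ioc.2 hz)]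
    have h1 : Real.exp (-(l*z)) * Real.exp (l*z) = 1 := by rw [← Real.exp_add]; simp
    linear_combination ψ z * h1
  rw [e1, e2, hval x hx le_rfl]
  have h2 : Real.exp (-(l*(0:ℝ))) = 1 := by simp
  rw [h2]
  ring

lemma iic_neg_eq (f : ℝ → ℝ) (c : ℝ) : (∫ y in Set.Iic c, f (-y)) = ∫ y in Set.Ici (-c), f y := by
  rw [integral_comp_neg_Iic, ← integral_Ici_eq_integral_Ioi]

lemma id3 (l : ℝ) (hl : 0 < l) (ψ φ : ℝ → ℝ) (hψ : Integrable ψ)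
    (hφ : ∀ x > (0:ℝ), φ x = Real.exp (l*x) * ∫ y in Set.Ici x, Real.exp (-(l*y)) * ψ y)
    {x : ℝ} (hx : 0 < x) :
    φ x = (∫ y in Set.Ici (0:ℝ), Real.exp (-(l*y)) * ψ y) + ∫ y in (0:ℝ)..x, (l * φ y - ψ y) := by
  have hIic : ∀ c : ℝ, (∫ y in Set.Iic c, Real.exp (l*y) * ψ (-y))
      = ∫ y in Set.Ici (-c), Real.exp (-(l*y)) * ψ y := by
    intro c
    rw [← iic_neg_eq (fun y => Real.exp (-(l*y)) * ψ y) c]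
    apply setIntegral_congr_fun measurableSet_Iic
    intro y _
    dsimp only
    rw [mul_neg, neg_neg]
  have hφ' : ∀ t < (0:ℝ), φ (-t) = Real.exp (-(l*t)) * ∫ y in Set.Iic t, Real.exp (l*y) * (fun s => ψ (-s)) y := by
    intro t ht
    rw [hφ (-t) (by linarith), mul_neg]
    congr 1
    rw [show Set.Ici (-t) = Set.Ici (-(t:ℝ)) from rfl] at *
    rw [← hIic t]
  have h := id1 l hl (fun s => ψ (-s)) (fun s => φ (-s)) hψ.comp_neg hφ' (x := -x) (by linarith)
  rw [neg_neg] at h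
  rw [h, hIic 0, neg_zero]
  congr 1
  have := intervalIntegral.integral_comp_neg (fun u => l * φ u - ψ u) (a := -x) (b := 0)
  rw [neg_zero, neg_neg] at this
  exact this

lemma id4 (l B : ℝ) (hl : 0 < l) (ψ φ : ℝ → ℝ) (hψ : Integrable ψ)
    (hφ : ∀ x < (0:ℝ), φ x = B * Real.exp (l*x) + ∫ y in x..(0:ℝ), Real.exp (l*(x-y)) * ψ y)
    {x : ℝ} (hx : x < 0) :
    φ x = B - ∫ y in x..(0:ℝ), (l * φ y - ψ y) := by
  have hφ' : ∀ t > (0:ℝ), φ (-t) = B * Real.exp (-(l*t))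
      + ∫ y in (0:ℝ)..t, Real.exp (-(l*(t-y))) * (fun s => ψ (-s)) y := by
    intro t ht
    rw [hφ (-t) (by linarith)]
    congr 1
    · rw [mul_neg]
    · have h2 := intervalIntegral.integral_comp_neg (fun u => Real.exp (l*(-t-u)) * ψ u) (a := 0) (b := t)
      rw [neg_zero] at h2
      have h3 : ∫ y in (0:ℝ)..t, Real.exp (-(l*(t-y))) * (fun s => ψ (-s)) y
          = ∫ y in (0:ℝ)..t, Real.exp (l*(-t - -y)) * ψ (-y) := by
        apply intervalIntegral.integral_congr
        intro z _
        dsimp only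
        congr 2
        ring
      rw [h3, h2]
  have h := id2 l B hl (fun s => ψ (-s)) (fun s => φ (-s)) hψ.comp_neg hφ' (x := -x) (by linarith)
  rw [neg_neg] at h
  rw [h]
  congr 1
  have h4 := intervalIntegral.integral_comp_neg (fun u => l * φ u - ψ u) (a := 0) (b := -x)
  rw [neg_neg, neg_zero] at h4
  exact h4

lemma int_phi1 (l A C1 : ℝ) (hl : 0 < l) (ψ φ : ℝ → ℝ) (hψ : Integrable ψ)
    (hC1 : C1 = ∫ y in Set.Iic (0:ℝ), Real.exp (l*y) * ψ y)
    (hφn : ∀ x < (0:ℝ), φ x = Real.exp (-(l*x)) * ∫ y in Set.Iic x, Real.exp (l*y) * ψ y)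
    (hφp : ∀ x > (0:ℝ), φ x = A * Real.exp (-(l*x)) + ∫ y in (0:ℝ)..x, Real.exp (-(l*(x-y))) * ψ y) :
    Integrable φ := by
  have hkI : IntegrableOn (fun t : ℝ => Real.exp (-(l*t))) (Set.Ici 0) := by
    rw [integrableOn_Ici_iff_integrableOn_Ioi]
    simpa [neg_mul] using exp_neg_integrableOn_Ioi 0 hl
  set k : ℝ → ℝ := Set.indicator (Set.Ici 0) (fun t => Real.exp (-(l*t))) with hk
  have hki : Integrable k := hkI.integrable_indicator measurableSet_Ici
  have hconv : Integrable (fun x => ∫ t, ψ t * k (x - t)) := by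
    have h := MeasureTheory.Integrable.integrable_convolution (ContinuousLinearMap.mul ℝ ℝ) hψ hki
    apply h.congr
    filter_upwards [] with x
    rw [convolution_def]
    simp only [ContinuousLinearMap.mul_apply']
  have hkey : ∀ x : ℝ, (∫ t, ψ t * k (x - t)) = ∫ t in Set.Iic x, ψ t * Real.exp (-(l*(x-t))) := by
    intro x
    rw [← integral_indicator measurableSet_Iic]
    congr 1
    funext t
    by_cases ht : t ≤ x
    · rw [Set.indicator_of_mem (Set.mem_Iic.2 ht), hk,
        Set.indicator_of_mem (Set.mem_Ici.2 (sub_nonneg.2 ht))]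
    · rw [Set.indicator_of_notMem (fun hmem => ht (Set.mem_Iic.1 hmem)), hk,
        Set.indicator_of_notMem (fun hmem => ht (sub_nonneg.1 (Set.mem_Ici.1 hmem))), mul_zero]
  have hpull : ∀ (x : ℝ) (s : Set ℝ), MeasurableSet s → (∫ t in s, ψ t * Real.exp (-(l*(x-t))))
      = Real.exp (-(l*x)) * ∫ t in s, Real.exp (l*t) * ψ t := by
    intro x s hs
    rw [← MeasureTheory.integral_const_mul]
    apply setIntegral_congr_fun hs
    intro t _
    dsimp only
    rw [show Real.exp (-(l*x)) * (Real.exp (l*t) * ψ t) = (Real.exp (-(l*x)) * Real.exp (l*t)) * ψ t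
      from by ring, ← Real.exp_add, show -(l*x) + l*t = -(l*(x-t)) from by ring]
    ring
  have hIoi : Integrable (Set.indicator (Set.Ioi (0:ℝ)) (fun s => Real.exp (-(l*s)))) :=
    (hkI.mono_set Set.Ioi_subset_Ici_self).integrable_indicator measurableSet_Ioi
  have hwi : Integrable (fun x => (A - C1) * Set.indicator (Set.Ioi (0:ℝ)) (fun s => Real.exp (-(l*s))) x
      + ∫ t in Set.Iic x, ψ t * Real.exp (-(l*(x-t)))) := by
    apply Integrable.add (hIoi.const_mul _)
    apply hconv.congr
    filter_upwards [] with x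
    exact hkey x
  apply hwi.congr
  filter_upwards [ae_ne_zero] with x hx0
  rcases lt_or_gt_of_ne hx0 with hx | hx
  · rw [Set.indicator_of_notMem (fun hmem => lt_asymm hx (Set.mem_Ioi.1 hmem)), mul_zero, zero_add,
      hpull x _ measurableSet_Iic, hφn x hx]
  · have hIx : IntegrableOn (fun t => ψ t * Real.exp (-(l*(x-t)))) (Set.Iic x) := by
      apply Integrable.mono' (hψ.norm.restrict)
      · exact hψ.1.restrict.mul
          ((continuous_const.mul (continuous_const.sub continuous_id)).neg.rexp.aestronglyMeasurable.restrict)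
      · filter_upwards [ae_restrict_mem measurableSet_Iic] with t ht
        rw [norm_mul]
        have h1 : Real.exp (-(l*(x-t))) ≤ 1 :=
          Real.exp_le_one_iff.2 (by nlinarith [Set.mem_Iic.1 ht, hl.le])
        calc ‖ψ t‖ * ‖Real.exp (-(l*(x-t)))‖ ≤ ‖ψ t‖ * 1 := by
              apply mul_le_mul_of_nonneg_left _ (norm_nonneg _)
              rw [Real.norm_eq_abs, abs_of_pos (Real.exp_pos _)]; exact h1
          _ = ‖ψ t‖ := mul_one _
    have hdisj : Disjoint (Set.Iic (0:ℝ)) (Set.Ioc (0:ℝ) x) := by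
      rw [Set.disjoint_left]; intro z hz1 hz2
      exact absurd hz2.1 (not_lt.2 (Set.mem_Iic.1 hz1))
    have hsplit : ∫ t in Set.Iic x, ψ t * Real.exp (-(l*(x-t)))
        = (∫ t in Set.Iic (0:ℝ), ψ t * Real.exp (-(l*(x-t))))
          + ∫ t in Set.Ioc (0:ℝ) x, ψ t * Real.exp (-(l*(x-t))) := by
      rw [← setIntegral_union hdisj measurableSet_Ioc
        (hIx.mono_set (Set.Iic_subset_Iic.2 hx.le)) (hIx.mono_set (fun z hz => hz.2)),
        Set.Iic_union_Ioc_eq_Iic hx.le]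
    rw [Set.indicator_of_mem (Set.mem_Ioi.2 hx), hsplit, hpull x _ measurableSet_Iic, ← hC1,
      hφp x hx, intervalIntegral.integral_of_le hx.le]
    rw [show ∫ t in Set.Ioc (0:ℝ) x, Real.exp (-(l*(x-t))) * ψ t
        = ∫ t in Set.Ioc (0:ℝ) x, ψ t * Real.exp (-(l*(x-t))) from
      setIntegral_congr_fun measurableSet_Ioc (fun t _ => mul_comm _ _)]
    ring


lemma refl_int (l c : ℝ) (ψ : ℝ → ℝ) :
    (∫ y in Set.Iic c, Real.exp (l*y) * ψ (-y)) = ∫ y in Set.Ici (-c), Real.exp (-(l*y)) * ψ y := by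
  rw [← iic_neg_eq (fun y => Real.exp (-(l*y)) * ψ y) c]
  apply setIntegral_congr_fun measurableSet_Iic
  intro y _
  dsimp only
  rw [mul_neg, neg_neg]

lemma int_phim (l B C4 : ℝ) (hl : 0 < l) (ψ φ : ℝ → ℝ) (hψ : Integrable ψ)
    (hC4 : C4 = ∫ y in Set.Ici (0:ℝ), Real.exp (-(l*y)) * ψ y)
    (hφp : ∀ x > (0:ℝ), φ x = Real.exp (l*x) * ∫ y in Set.Ici x, Real.exp (-(l*y)) * ψ y)
    (hφn : ∀ x < (0:ℝ), φ x = B * Real.exp (l*x) + ∫ y in x..(0:ℝ), Real.exp (l*(x-y)) * ψ y) :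
    Integrable φ := by
  have hφn' : ∀ t < (0:ℝ), φ (-t) = Real.exp (-(l*t))
      * ∫ y in Set.Iic t, Real.exp (l*y) * (fun s => ψ (-s)) y := by
    intro t ht
    rw [hφp (-t) (by linarith), mul_neg]
    congr 1
    rw [refl_int l t ψ]
  have hφp' : ∀ t > (0:ℝ), φ (-t) = B * Real.exp (-(l*t))
      + ∫ y in (0:ℝ)..t, Real.exp (-(l*(t-y))) * (fun s => ψ (-s)) y := by
    intro t ht
    rw [hφn (-t) (by linarith)]
    congr 1
    · rw [mul_neg]
    · have h2 := intervalIntegral.integral_comp_neg (fun u => Real.exp (l*(-t-u)) * ψ u) (a := 0) (b := t)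
      rw [neg_zero] at h2
      have h3 : ∫ y in (0:ℝ)..t, Real.exp (-(l*(t-y))) * (fun s => ψ (-s)) y
          = ∫ y in (0:ℝ)..t, Real.exp (l*(-t - -y)) * ψ (-y) := by
        apply intervalIntegral.integral_congr
        intro z _
        dsimp only
        congr 2
        ring
      rw [h3, h2]
  have hC4' : C4 = ∫ y in Set.Iic (0:ℝ), Real.exp (l*y) * (fun s => ψ (-s)) y := by
    rw [hC4]
    have := refl_int l 0 ψ
    rw [neg_zero] at this
    rw [this]
  have h := int_phi1 l B C4 hl (fun s => ψ (-s)) (fun s => φ (-s)) hψ.comp_neg hC4' hφn' hφp'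
  have h2 := h.comp_neg
  apply h2.congr
  filter_upwards [] with t
  simp

theorem stmt4 (p p' q q' : ℝ) (hp : 0 ≤ p) (hp' : 0 ≤ p') (hq : 0 ≤ q) (hq' : 0 ≤ q')
    (hpp : p + p' ≤ 1) (hqq : q + q' ≤ 1)
    (l : ℝ) (hl : 0 < l) (ψ1 ψm : ℝ → ℝ) (hψ1 : Integrable ψ1) (hψm : Integrable ψm)
    (C1 C4 : ℝ)
    (hC1 : C1 = ∫ y in Set.Iic (0:ℝ), Real.exp (l*y) * ψ1 y)
    (hC4 : C4 = ∫ y in Set.Ici (0:ℝ), Real.exp (-(l*y)) * ψm y)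
    (φ1 φm : ℝ → ℝ)
    (hφ1n : ∀ x < (0:ℝ), φ1 x = Real.exp (-(l*x)) * ∫ y in Set.Iic x, Real.exp (l*y) * ψ1 y)
    (hφ1p : ∀ x > (0:ℝ), φ1 x = (p*C1 + q'*C4) * Real.exp (-(l*x))
        + ∫ y in (0:ℝ)..x, Real.exp (-(l*(x-y))) * ψ1 y)
    (hφmp : ∀ x > (0:ℝ), φm x = Real.exp (l*x) * ∫ y in Set.Ici x, Real.exp (-(l*y)) * ψm y)
    (hφmn : ∀ x < (0:ℝ), φm x = (p'*C1 + q*C4) * Real.exp (l*x)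
        + ∫ y in x..(0:ℝ), Real.exp (l*(x-y)) * ψm y) :
    Integrable φ1 ∧ Integrable φm ∧
    (∀ x < (0:ℝ), φ1 x = C1 + ∫ y in x..(0:ℝ), (l * φ1 y - ψ1 y)) ∧
    (∀ x > (0:ℝ), φ1 x = (p*C1 + q'*C4) - ∫ y in (0:ℝ)..x, (l * φ1 y - ψ1 y)) ∧
    (∀ x > (0:ℝ), φm x = C4 + ∫ y in (0:ℝ)..x, (l * φm y - ψm y)) ∧
    (∀ x < (0:ℝ), φm x = (p'*C1 + q*C4) - ∫ y in x..(0:ℝ), (l * φm y - ψm y)) ∧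
    (∃ a b c d : ℝ,
      Tendsto φ1 (nhdsWithin 0 (Set.Ioi 0)) (nhds a) ∧
      Tendsto φ1 (nhdsWithin 0 (Set.Iio 0)) (nhds b) ∧
      Tendsto φm (nhdsWithin 0 (Set.Ioi 0)) (nhds c) ∧
      Tendsto φm (nhdsWithin 0 (Set.Iio 0)) (nhds d) ∧
      a = p * b + q' * c ∧ d = p' * b + q * c) := by
  have hIφ1 : Integrable φ1 := int_phi1 l (p*C1 + q'*C4) C1 hl ψ1 φ1 hψ1 hC1 hφ1n hφ1p
  have hIφm : Integrable φm := int_phim l (p'*C1 + q*C4) C4 hl ψm φm hψm hC4 hφmp hφmn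
  have I1 : ∀ x < (0:ℝ), φ1 x = C1 + ∫ y in x..(0:ℝ), (l * φ1 y - ψ1 y) := by
    intro x hx
    rw [hC1]
    exact id1 l hl ψ1 φ1 hψ1 hφ1n hx
  have I2 : ∀ x > (0:ℝ), φ1 x = (p*C1 + q'*C4) - ∫ y in (0:ℝ)..x, (l * φ1 y - ψ1 y) :=
    fun x hx => id2 l (p*C1 + q'*C4) hl ψ1 φ1 hψ1 hφ1p hx
  have I3 : ∀ x > (0:ℝ), φm x = C4 + ∫ y in (0:ℝ)..x, (l * φm y - ψm y) := by
    intro x hx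
    rw [hC4]
    exact id3 l hl ψm φm hψm hφmp hx
  have I4 : ∀ x < (0:ℝ), φm x = (p'*C1 + q*C4) - ∫ y in x..(0:ℝ), (l * φm y - ψm y) :=
    fun x hx => id4 l (p'*C1 + q*C4) hl ψm φm hψm hφmn hx
  refine ⟨hIφ1, hIφm, I1, I2, I3, I4, p*C1 + q'*C4, C1, C4, p'*C1 + q*C4, ?_, ?_, ?_, ?_, by ring, by ring⟩
  · -- φ1 at 0+
    have hu : Integrable (fun y => l * φ1 y - ψ1 y) := (hIφ1.const_mul l).sub hψ1
    have hP : Continuous (fun x => ∫ y in (0:ℝ)..x, (l * φ1 y - ψ1 y)) :=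
      intervalIntegral.continuous_primitive (fun _ _ => hu.intervalIntegrable) 0
    have h1 : Tendsto (fun x => (p*C1 + q'*C4) - ∫ y in (0:ℝ)..x, (l * φ1 y - ψ1 y))
        (nhdsWithin 0 (Set.Ioi 0))
        (nhds ((p*C1 + q'*C4) - ∫ y in (0:ℝ)..(0:ℝ), (l * φ1 y - ψ1 y))) :=
      ((continuous_const.sub hP).tendsto 0).mono_left nhdsWithin_le_nhds
    rw [intervalIntegral.integral_same, sub_zero] at h1
    apply h1.congr'
    filter_upwards [self_mem_nhdsWithin] with x hx
    exact (I2 x hx).symm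
  · -- φ1 at 0-
    have hu : Integrable (fun y => l * φ1 y - ψ1 y) := (hIφ1.const_mul l).sub hψ1
    have hP : Continuous (fun x => ∫ y in (0:ℝ)..x, (l * φ1 y - ψ1 y)) :=
      intervalIntegral.continuous_primitive (fun _ _ => hu.intervalIntegrable) 0
    have h1 : Tendsto (fun x => C1 - ∫ y in (0:ℝ)..x, (l * φ1 y - ψ1 y))
        (nhdsWithin 0 (Set.Iio 0))
        (nhds (C1 - ∫ y in (0:ℝ)..(0:ℝ), (l * φ1 y - ψ1 y))) :=
      ((continuous_const.sub hP).tendsto 0).mono_left nhdsWithin_le_nhds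
    rw [intervalIntegral.integral_same, sub_zero] at h1
    apply h1.congr'
    filter_upwards [self_mem_nhdsWithin] with x hx
    rw [I1 x hx, intervalIntegral.integral_symm]
    ring
  · -- φm at 0+
    have hu : Integrable (fun y => l * φm y - ψm y) := (hIφm.const_mul l).sub hψm
    have hP : Continuous (fun x => ∫ y in (0:ℝ)..x, (l * φm y - ψm y)) :=
      intervalIntegral.continuous_primitive (fun _ _ => hu.intervalIntegrable) 0
    have h1 : Tendsto (fun x => C4 + ∫ y in (0:ℝ)..x, (l * φm y - ψm y))
        (nhdsWithin 0 (Set.Ioi 0))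
        (nhds (C4 + ∫ y in (0:ℝ)..(0:ℝ), (l * φm y - ψm y))) :=
      ((continuous_const.add hP).tendsto 0).mono_left nhdsWithin_le_nhds
    rw [intervalIntegral.integral_same, add_zero] at h1
    apply h1.congr'
    filter_upwards [self_mem_nhdsWithin] with x hx
    exact (I3 x hx).symm
  · -- φm at 0-
    have hu : Integrable (fun y => l * φm y - ψm y) := (hIφm.const_mul l).sub hψm
    have hP : Continuous (fun x => ∫ y in (0:ℝ)..x, (l * φm y - ψm y)) :=
      intervalIntegral.continuous_primitive (fun _ _ => hu.intervalIntegrable) 0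
    have h1 : Tendsto (fun x => (p'*C1 + q*C4) + ∫ y in (0:ℝ)..x, (l * φm y - ψm y))
        (nhdsWithin 0 (Set.Iio 0))
        (nhds ((p'*C1 + q*C4) + ∫ y in (0:ℝ)..(0:ℝ), (l * φm y - ψm y))) :=
      ((continuous_const.add hP).tendsto 0).mono_left nhdsWithin_le_nhds
    rw [intervalIntegral.integral_same, add_zero] at h1
    apply h1.congr'
    filter_upwards [self_mem_nhdsWithin] with x hx
    rw [I4 x hx, intervalIntegral.integral_symm]
    ring
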